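/- Let δ > 0, K ≥ 0, R > 0 and b, w ∈ ℝ, and define T : ℝ → ℝ by T(x) = (b + x + (x − x³)δ + K w δ)/(3 + Kδ). Then for all x, y ∈ [−R, R] one has |T(x) − T(y)| ≤ α|x − y| with α = (1 + (3R² + 1)δ)/(3 + Kδ). Moreover, if K ≥ 3R² + 1 then α < 1, so T is a contraction on the interval [−R, R]. -/
import Mathlib


/-- The proximal single-line operator for the Ginzburg–Landau nonlinearity,
`T(x) = (b + x + (x - x³)δ + Kwδ)/(3 + Kδ)`, satisfies on `[-R, R]` the Lipschitz
bound `|T x - T y| ≤ α|x - y|` with `α = (1 + (3R² + 1)δ)/(3 + Kδ)`; moreover if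
`K ≥ 3R² + 1` then `α < 1`, so `T` is a contraction on `[-R, R]`. -/
theorem proximal_GL_operator_contraction
    (δ K R b w : ℝ) (hδ : 0 < δ) (hK : 0 ≤ K) (hR : 0 < R)
    (T : ℝ → ℝ)
    (hT : ∀ x, T x = (b + x + (x - x ^ 3) * δ + K * w * δ) / (3 + K * δ)) :
    (∀ x ∈ Set.Icc (-R) R, ∀ y ∈ Set.Icc (-R) R,
        |T x - T y| ≤ ((1 + (3 * R ^ 2 + 1) * δ) / (3 + K * δ)) * |x - y|) ∧
      (3 * R ^ 2 + 1 ≤ K → (1 + (3 * R ^ 2 + 1) * δ) / (3 + K * δ) < 1) := by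
  have hD : (0:ℝ) < 3 + K * δ := by positivity
  constructor
  · rintro x ⟨hx1, hx2⟩ y ⟨hy1, hy2⟩
    rw [hT, hT, div_sub_div_same, abs_div, abs_of_pos hD, div_mul_eq_mul_div]
    apply div_le_div_of_nonneg_right ?_ hD.le
    have key : (b + x + (x - x ^ 3) * δ + K * w * δ) -
        (b + y + (y - y ^ 3) * δ + K * w * δ)
        = (x - y) * (1 + (1 - (x ^ 2 + x * y + y ^ 2)) * δ) := by ring
    rw [key, abs_mul, mul_comm |x - y|]
    apply mul_le_mul_of_nonneg_right _ (abs_nonneg _)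
    rw [abs_le]
    have hs0 : 0 ≤ x ^ 2 + x * y + y ^ 2 := by nlinarith [sq_nonneg (x + y), sq_nonneg x, sq_nonneg y]
    have hs : x ^ 2 + x * y + y ^ 2 ≤ 3 * R ^ 2 := by
      nlinarith [mul_nonneg (by linarith : (0:ℝ) ≤ R - x) (by linarith : (0:ℝ) ≤ R + x),
        mul_nonneg (by linarith : (0:ℝ) ≤ R - y) (by linarith : (0:ℝ) ≤ R + y),
        sq_nonneg (x - y)]
    constructor
    · nlinarith [mul_le_mul_of_nonneg_left hs hδ.le]
    · nlinarith [mul_le_mul_of_nonneg_left hs0 hδ.le]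
  · intro hKc
    rw [div_lt_one hD]
    nlinarith
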